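/- (Sauer–Shelah lemma) If a family T of subsets of a set of size t has cardinality strictly greater than Σ_{i=0}^{d-1} C(t,i), then there exists a subset I of size d that is shattered by T, i.e., every subset of I equals S ∩ I for some S ∈ T. -/

import Mathlib

/-- Sauer–Shelah lemma: if a family `T` of subsets of a `t`-element set has cardinality
strictly greater than `Σ_{i<d} C(t,i)`, then some `d`-element set `I` is shattered by `T`. -/
theorem stmt_1 (t d : ℕ) (T : Finset (Finset (Fin t)))
    (hT : ∑ i ∈ Finset.range d, t.choose i < T.card) :
    ∃ I : Finset (Fin t), I.card = d ∧ ∀ J ⊆ I, ∃ S ∈ T, S ∩ I = J := by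
  have hTne : T.Nonempty := Finset.card_pos.1 (by omega)
  by_cases hd : d ≤ T.vcDim
  · have hshne : T.shatterer.Nonempty :=
      ⟨∅, Finset.mem_shatterer.2 (Finset.shatters_empty.2 hTne)⟩
    obtain ⟨s, hsmem, hs⟩ := Finset.exists_mem_eq_sup T.shatterer hshne Finset.card
    have hss : T.Shatters s := Finset.mem_shatterer.1 hsmem
    have hcard : d ≤ s.card := by rw [show s.card = T.vcDim from hs.symm]; exact hd
    obtain ⟨I, hIs, hIcard⟩ := Finset.exists_subset_card_eq hcard
    refine ⟨I, hIcard, fun J hJ ↦ ?_⟩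
    obtain ⟨S, hS, hSI⟩ := (hss.mono_right hIs) hJ
    exact ⟨S, hS, by rwa [Finset.inter_comm]⟩
  · exfalso
    push_neg at hd
    have h1 : T.card ≤ T.shatterer.card := Finset.card_le_card_shatterer T
    have h2 : T.shatterer.card ≤ ∑ k ∈ Finset.Iic T.vcDim, (Fintype.card (Fin t)).choose k :=
      Finset.card_shatterer_le_sum_vcDim
    have h3 : ∑ k ∈ Finset.Iic T.vcDim, (Fintype.card (Fin t)).choose k
        ≤ ∑ i ∈ Finset.range d, t.choose i := by
      simp only [Fintype.card_fin]
      refine Finset.sum_le_sum_of_subset ?_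
      intro x hx
      simp only [Finset.mem_Iic, Finset.mem_range] at *
      omega
    omega
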